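/- Let G be a graph. There is a bijection between homogeneous pairs (U, W_1, W_2) of G with both W_1 and W_2 non-empty, and M_hp-partitions σ of G satisfying: at least 2 vertices are mapped to parts 3–6, parts 1 and 2 are each non-empty, and at least one of parts 1 and 2 contains at least 2 vertices. -/
import Mathlib

inductive Entry | zero | one | star
deriving DecidableEq

/-- The 6×6 matrix `M_hp` for homogeneous pairs (rows/columns indexed 1..6). -/
def Mhp : Fin 6 → Fin 6 → Entry :=
  ![![.star, .star, .one,  .zero, .one,  .zero],
    ![.star, .star, .one,  .one,  .zero, .zero],
    ![.one,  .one,  .star, .star, .star, .star],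
    ![.zero, .one,  .star, .star, .star, .star],
    ![.one,  .zero, .star, .star, .star, .star],
    ![.zero, .zero, .star, .star, .star, .star]]

/-- `σ` is an `M`-partition of `G`. -/
def IsMPartition {V : Type*} (G : SimpleGraph V) {D : Type*} (M : D → D → Entry)
    (σ : V → D) : Prop :=
  ∀ u v : V, u ≠ v →
    (G.Adj u v → M (σ u) (σ v) ≠ Entry.zero) ∧
    (¬ G.Adj u v → M (σ u) (σ v) ≠ Entry.one)

open Classical in
/-- Forward map: from a homogeneous-pair triple to a colouring. -/
noncomputable def hpFwd {V : Type} (G : SimpleGraph V) (t : Set V × Set V × Set V)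
    (v : V) : Fin 6 :=
  if v ∈ t.2.1 then 0
  else if v ∈ t.2.2 then 1
  else if ∀ w ∈ t.2.1, G.Adj v w then
    (if ∀ w ∈ t.2.2, G.Adj v w then 2 else 4)
  else (if ∀ w ∈ t.2.2, G.Adj v w then 3 else 5)

section lemmas
variable {V : Type} (G : SimpleGraph V) (t : Set V × Set V × Set V)

lemma hpFwd_s0 (hd : Disjoint t.2.1 t.2.2) :
    {v : V | hpFwd G t v = 0} = t.2.1 := by
  ext v
  simp only [Set.mem_setOf_eq, hpFwd]
  split_ifs with h1 h2 h3 h4 h5 <;> simp_all <;> decide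

lemma hpFwd_s1 (hd : Disjoint t.2.1 t.2.2) :
    {v : V | hpFwd G t v = 1} = t.2.2 := by
  ext v
  by_cases h1 : v ∈ t.2.1
  · have h2 : v ∉ t.2.2 := Set.disjoint_left.mp hd h1
    simp [hpFwd, h1, h2]
  · by_cases h2 : v ∈ t.2.2
    · simp [hpFwd, h1, h2]
    · simp only [Set.mem_setOf_eq, hpFwd, h1, h2, if_false]
      split_ifs <;> simp [h2]

lemma hpFwd_sU (hu : t.1 ∪ t.2.1 ∪ t.2.2 = Set.univ)
    (d1 : Disjoint t.1 t.2.1) (d2 : Disjoint t.1 t.2.2) :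
    {v : V | 2 ≤ (hpFwd G t v).val} = t.1 := by
  ext v
  simp only [Set.mem_setOf_eq, hpFwd]
  constructor
  · intro h
    split_ifs at h with h1 h2 h3 h4 h5
    · simp at h
    · simp at h
    all_goals
    · have : v ∈ t.1 ∪ t.2.1 ∪ t.2.2 := hu ▸ Set.mem_univ v
      rcases this with (h' | h') | h'
      · exact h'
      · exact absurd h' h1
      · exact absurd h' h2
  · intro hv
    have h1 : v ∉ t.2.1 := Set.disjoint_left.mp d1 hv
    have h2 : v ∉ t.2.2 := Set.disjoint_left.mp d2 hv
    simp only [h1, h2, if_false]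
    split_ifs <;> decide

end lemmas

lemma mhp_star : ∀ a b : Fin 6, 2 ≤ a.val → 2 ≤ b.val → Mhp a b = .star := by decide

lemma mhp_col0 : ∀ a : Fin 6, 2 ≤ a.val → Mhp a 0 = .one ∨ Mhp a 0 = .zero := by decide
lemma mhp_col1 : ∀ a : Fin 6, 2 ≤ a.val → Mhp a 1 = .one ∨ Mhp a 1 = .zero := by decide

section main
variable {V : Type} (G : SimpleGraph V) (t : Set V × Set V × Set V)

lemma hpFwd_ge (x : V) (h1 : x ∉ t.2.1) (h2 : x ∉ t.2.2) :
    2 ≤ (hpFwd G t x).val := by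
  simp only [hpFwd, h1, h2, if_false]
  split_ifs <;> decide

lemma hpFwd_isM (hu : t.1 ∪ t.2.1 ∪ t.2.2 = Set.univ)
    (hom1 : ∀ v ∈ t.1, (∀ w ∈ t.2.1, G.Adj v w) ∨ (∀ w ∈ t.2.1, ¬ G.Adj v w))
    (hom2 : ∀ v ∈ t.1, (∀ w ∈ t.2.2, G.Adj v w) ∨ (∀ w ∈ t.2.2, ¬ G.Adj v w)) :
    IsMPartition G Mhp (hpFwd G t) := by
  have hval : ∀ v : V, v ∉ t.2.1 → v ∉ t.2.2 →
      ((∀ w ∈ t.2.1, G.Adj v w) ∧ (∀ w ∈ t.2.2, G.Adj v w) ∧ hpFwd G t v = 2) ∨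
      ((∀ w ∈ t.2.1, ¬G.Adj v w) ∧ (∀ w ∈ t.2.2, G.Adj v w) ∧ hpFwd G t v = 3) ∨
      ((∀ w ∈ t.2.1, G.Adj v w) ∧ (∀ w ∈ t.2.2, ¬G.Adj v w) ∧ hpFwd G t v = 4) ∨
      ((∀ w ∈ t.2.1, ¬G.Adj v w) ∧ (∀ w ∈ t.2.2, ¬G.Adj v w) ∧ hpFwd G t v = 5) := by
    intro v h1 h2
    have hvU : v ∈ t.1 := by
      have : v ∈ t.1 ∪ t.2.1 ∪ t.2.2 := hu ▸ Set.mem_univ v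
      rcases this with (h | h) | h
      · exact h
      · exact absurd h h1
      · exact absurd h h2
    have ha1 := hom1 v hvU
    have ha2 := hom2 v hvU
    by_cases b1 : ∀ w ∈ t.2.1, G.Adj v w <;> by_cases b2 : ∀ w ∈ t.2.2, G.Adj v w
    · exact Or.inl ⟨b1, b2, by simp only [hpFwd, h1, h2, if_false]; rw [if_pos b1, if_pos b2]⟩
    · refine Or.inr (Or.inr (Or.inl ⟨b1, ha2.resolve_left b2, ?_⟩))
      simp only [hpFwd, h1, h2, if_false]; rw [if_pos b1, if_neg b2]
    · refine Or.inr (Or.inl ⟨ha1.resolve_left b1, b2, ?_⟩)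
      simp only [hpFwd, h1, h2, if_false]; rw [if_neg b1, if_pos b2]
    · refine Or.inr (Or.inr (Or.inr ⟨ha1.resolve_left b1, ha2.resolve_left b2, ?_⟩))
      simp only [hpFwd, h1, h2, if_false]; rw [if_neg b1, if_neg b2]
  have hloc : ∀ x : V, x ∈ t.2.1 ∨ x ∈ t.2.2 ∨ (x ∉ t.2.1 ∧ x ∉ t.2.2) := by
    intro x; by_cases h1 : x ∈ t.2.1
    · exact Or.inl h1
    · by_cases h2 : x ∈ t.2.2
      · exact Or.inr (Or.inl h2)
      · exact Or.inr (Or.inr ⟨h1, h2⟩)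
  intro u v huv
  rcases hloc u with hu1 | hu1 | ⟨hu1, hu2⟩ <;> rcases hloc v with hv1 | hv1 | ⟨hv1, hv2⟩
  -- u ∈ W1, v ∈ W1
  · have eu : hpFwd G t u = 0 := by simp [hpFwd, hu1]
    have ev : hpFwd G t v = 0 := by simp [hpFwd, hv1]
    rw [eu, ev]; exact ⟨fun _ => by decide, fun _ => by decide⟩
  -- u ∈ W1, v ∈ W2
  · have eu : hpFwd G t u = 0 := by simp [hpFwd, hu1]
    by_cases hv0 : v ∈ t.2.1
    · have ev : hpFwd G t v = 0 := by simp [hpFwd, hv0]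
      rw [eu, ev]; exact ⟨fun _ => by decide, fun _ => by decide⟩
    · have ev : hpFwd G t v = 1 := by simp [hpFwd, hv0, hv1]
      rw [eu, ev]; exact ⟨fun _ => by decide, fun _ => by decide⟩
  -- u ∈ W1, v ∈ U
  · have eu : hpFwd G t u = 0 := by simp [hpFwd, hu1]
    rcases hval v hv1 hv2 with ⟨a1, a2, ev⟩ | ⟨a1, a2, ev⟩ | ⟨a1, a2, ev⟩ | ⟨a1, a2, ev⟩ <;>
      rw [eu, ev]
    · exact ⟨fun _ => by decide, fun hn => absurd (a1 u hu1).symm hn⟩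
    · exact ⟨fun ha => absurd ha.symm (a1 u hu1), fun _ => by decide⟩
    · exact ⟨fun _ => by decide, fun hn => absurd (a1 u hu1).symm hn⟩
    · exact ⟨fun ha => absurd ha.symm (a1 u hu1), fun _ => by decide⟩
  -- u ∈ W2, v ∈ W1
  · have ev : hpFwd G t v = 0 := by simp [hpFwd, hv1]
    by_cases hu0 : u ∈ t.2.1
    · have eu : hpFwd G t u = 0 := by simp [hpFwd, hu0]
      rw [eu, ev]; exact ⟨fun _ => by decide, fun _ => by decide⟩
    · have eu : hpFwd G t u = 1 := by simp [hpFwd, hu0, hu1]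
      rw [eu, ev]; exact ⟨fun _ => by decide, fun _ => by decide⟩
  -- u ∈ W2, v ∈ W2
  · by_cases hu0 : u ∈ t.2.1 <;> by_cases hv0 : v ∈ t.2.1
    · have eu : hpFwd G t u = 0 := by simp [hpFwd, hu0]
      have ev : hpFwd G t v = 0 := by simp [hpFwd, hv0]
      rw [eu, ev]; exact ⟨fun _ => by decide, fun _ => by decide⟩
    · have eu : hpFwd G t u = 0 := by simp [hpFwd, hu0]
      have ev : hpFwd G t v = 1 := by simp [hpFwd, hv0, hv1]
      rw [eu, ev]; exact ⟨fun _ => by decide, fun _ => by decide⟩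
    · have eu : hpFwd G t u = 1 := by simp [hpFwd, hu0, hu1]
      have ev : hpFwd G t v = 0 := by simp [hpFwd, hv0]
      rw [eu, ev]; exact ⟨fun _ => by decide, fun _ => by decide⟩
    · have eu : hpFwd G t u = 1 := by simp [hpFwd, hu0, hu1]
      have ev : hpFwd G t v = 1 := by simp [hpFwd, hv0, hv1]
      rw [eu, ev]; exact ⟨fun _ => by decide, fun _ => by decide⟩
  -- u ∈ W2, v ∈ U
  · by_cases hu0 : u ∈ t.2.1
    · have eu : hpFwd G t u = 0 := by simp [hpFwd, hu0]
      rcases hval v hv1 hv2 with ⟨a1, a2, ev⟩ | ⟨a1, a2, ev⟩ | ⟨a1, a2, ev⟩ | ⟨a1, a2, ev⟩ <;>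
        rw [eu, ev]
      · exact ⟨fun _ => by decide, fun hn => absurd (a1 u hu0).symm hn⟩
      · exact ⟨fun ha => absurd ha.symm (a1 u hu0), fun _ => by decide⟩
      · exact ⟨fun _ => by decide, fun hn => absurd (a1 u hu0).symm hn⟩
      · exact ⟨fun ha => absurd ha.symm (a1 u hu0), fun _ => by decide⟩
    · have eu : hpFwd G t u = 1 := by simp [hpFwd, hu0, hu1]
      rcases hval v hv1 hv2 with ⟨a1, a2, ev⟩ | ⟨a1, a2, ev⟩ | ⟨a1, a2, ev⟩ | ⟨a1, a2, ev⟩ <;>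
        rw [eu, ev]
      · exact ⟨fun _ => by decide, fun hn => absurd (a2 u hu1).symm hn⟩
      · exact ⟨fun _ => by decide, fun hn => absurd (a2 u hu1).symm hn⟩
      · exact ⟨fun ha => absurd ha.symm (a2 u hu1), fun _ => by decide⟩
      · exact ⟨fun ha => absurd ha.symm (a2 u hu1), fun _ => by decide⟩
  -- u ∈ U, v ∈ W1
  · rcases hval u hu1 hu2 with ⟨a1, a2, eu⟩ | ⟨a1, a2, eu⟩ | ⟨a1, a2, eu⟩ | ⟨a1, a2, eu⟩ <;>
      (have ev : hpFwd G t v = 0 := by simp [hpFwd, hv1]) <;> rw [eu, ev]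
    · exact ⟨fun _ => by decide, fun hn => absurd (a1 v hv1) hn⟩
    · exact ⟨fun ha => absurd ha (a1 v hv1), fun _ => by decide⟩
    · exact ⟨fun _ => by decide, fun hn => absurd (a1 v hv1) hn⟩
    · exact ⟨fun ha => absurd ha (a1 v hv1), fun _ => by decide⟩
  -- u ∈ U, v ∈ W2
  · by_cases hv0 : v ∈ t.2.1
    · rcases hval u hu1 hu2 with ⟨a1, a2, eu⟩ | ⟨a1, a2, eu⟩ | ⟨a1, a2, eu⟩ | ⟨a1, a2, eu⟩ <;>
        (have ev : hpFwd G t v = 0 := by simp [hpFwd, hv0]) <;> rw [eu, ev]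
      · exact ⟨fun _ => by decide, fun hn => absurd (a1 v hv0) hn⟩
      · exact ⟨fun ha => absurd ha (a1 v hv0), fun _ => by decide⟩
      · exact ⟨fun _ => by decide, fun hn => absurd (a1 v hv0) hn⟩
      · exact ⟨fun ha => absurd ha (a1 v hv0), fun _ => by decide⟩
    · rcases hval u hu1 hu2 with ⟨a1, a2, eu⟩ | ⟨a1, a2, eu⟩ | ⟨a1, a2, eu⟩ | ⟨a1, a2, eu⟩ <;>
        (have ev : hpFwd G t v = 1 := by simp [hpFwd, hv0, hv1]) <;> rw [eu, ev]
      · exact ⟨fun _ => by decide, fun hn => absurd (a2 v hv1) hn⟩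
      · exact ⟨fun _ => by decide, fun hn => absurd (a2 v hv1) hn⟩
      · exact ⟨fun ha => absurd ha (a2 v hv1), fun _ => by decide⟩
      · exact ⟨fun ha => absurd ha (a2 v hv1), fun _ => by decide⟩
  -- u ∈ U, v ∈ U
  · have hs := mhp_star _ _ (hpFwd_ge G t u hu1 hu2) (hpFwd_ge G t v hv1 hv2)
    rw [hs]
    exact ⟨fun _ h => (by cases h), fun _ h => (by cases h)⟩

end main

theorem homogeneous_pairs_bijection {V : Type} [Fintype V] [DecidableEq V]
    (G : SimpleGraph V) :
    Nonempty (
      {t : Set V × Set V × Set V //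
          t.1 ∪ t.2.1 ∪ t.2.2 = Set.univ ∧
          Disjoint t.1 t.2.1 ∧ Disjoint t.1 t.2.2 ∧ Disjoint t.2.1 t.2.2 ∧
          2 ≤ t.1.ncard ∧
          (2 ≤ t.2.1.ncard ∨ 2 ≤ t.2.2.ncard) ∧
          (∀ v ∈ t.1, (∀ w ∈ t.2.1, G.Adj v w) ∨ (∀ w ∈ t.2.1, ¬ G.Adj v w)) ∧
          (∀ v ∈ t.1, (∀ w ∈ t.2.2, G.Adj v w) ∨ (∀ w ∈ t.2.2, ¬ G.Adj v w)) ∧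
          t.2.1.Nonempty ∧ t.2.2.Nonempty}
      ≃
      {σ : V → Fin 6 //
          IsMPartition G Mhp σ ∧
          2 ≤ {v : V | 2 ≤ (σ v).val}.ncard ∧
          {v : V | σ v = 0}.Nonempty ∧ {v : V | σ v = 1}.Nonempty ∧
          (2 ≤ {v : V | σ v = 0}.ncard ∨ 2 ≤ {v : V | σ v = 1}.ncard)}) := by
  refine ⟨⟨fun p => ⟨hpFwd G p.1, ?_⟩,
      fun q => ⟨({v : V | 2 ≤ (q.1 v).val}, {v : V | q.1 v = 0}, {v : V | q.1 v = 1}), ?_⟩,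
      ?_, ?_⟩⟩
  · obtain ⟨t, hu, d1, d2, d3, hU, hW, hom1, hom2, hn1, hn2⟩ := p
    refine ⟨hpFwd_isM G t hu hom1 hom2, ?_, ?_, ?_, ?_⟩
    · rw [hpFwd_sU G t hu d1 d2]; exact hU
    · rw [hpFwd_s0 G t d3]; exact hn1
    · rw [hpFwd_s1 G t d3]; exact hn2
    · rw [hpFwd_s0 G t d3, hpFwd_s1 G t d3]; exact hW
  · obtain ⟨σ, hM, hU, hn1, hn2, hW⟩ := q
    refine ⟨?_, ?_, ?_, ?_, hU, hW, ?_, ?_, hn1, hn2⟩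
    · ext v
      have := (σ v).isLt
      simp only [Set.mem_union, Set.mem_setOf_eq, Set.mem_univ, iff_true, Fin.ext_iff,
        Fin.val_zero, Fin.val_one]
      omega
    · rw [Set.disjoint_left]
      intro a ha hb
      simp only [Set.mem_setOf_eq] at ha hb
      rw [hb] at ha; simp at ha
    · rw [Set.disjoint_left]
      intro a ha hb
      simp only [Set.mem_setOf_eq] at ha hb
      rw [hb] at ha; simp at ha
    · rw [Set.disjoint_left]
      intro a ha hb
      simp only [Set.mem_setOf_eq] at ha hb
      rw [ha] at hb; simp at hb
    · intro v hv
      simp only [Set.mem_setOf_eq] at hv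
      rcases mhp_col0 (σ v) hv with h | h
      · left
        intro w hw
        simp only [Set.mem_setOf_eq] at hw
        have hne : v ≠ w := by
          intro e; rw [e, hw] at hv; simp at hv
        by_contra hna
        exact (hM v w hne).2 hna (by rw [hw]; exact h)
      · right
        intro w hw
        simp only [Set.mem_setOf_eq] at hw
        have hne : v ≠ w := by
          intro e; rw [e, hw] at hv; simp at hv
        intro ha
        exact (hM v w hne).1 ha (by rw [hw]; exact h)
    · intro v hv
      simp only [Set.mem_setOf_eq] at hv
      rcases mhp_col1 (σ v) hv with h | h
      · left
        intro w hw
        simp only [Set.mem_setOf_eq] at hw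
        have hne : v ≠ w := by
          intro e; rw [e, hw] at hv; simp at hv
        by_contra hna
        exact (hM v w hne).2 hna (by rw [hw]; exact h)
      · right
        intro w hw
        simp only [Set.mem_setOf_eq] at hw
        have hne : v ≠ w := by
          intro e; rw [e, hw] at hv; simp at hv
        intro ha
        exact (hM v w hne).1 ha (by rw [hw]; exact h)
  · rintro ⟨t, hu, d1, d2, d3, hU, hW, hom1, hom2, hn1, hn2⟩
    apply Subtype.ext
    simp only
    refine Prod.ext ?_ (Prod.ext ?_ ?_)
    · exact hpFwd_sU G t hu d1 d2
    · exact hpFwd_s0 G t d3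
    · exact hpFwd_s1 G t d3
  · rintro ⟨σ, hM, hU, hn1, hn2, hW⟩
    apply Subtype.ext
    simp only
    funext v
    set t : Set V × Set V × Set V :=
      ({v : V | 2 ≤ (σ v).val}, {v : V | σ v = 0}, {v : V | σ v = 1}) with ht
    have hlt := (σ v).isLt
    have hcases : σ v = 0 ∨ σ v = 1 ∨ σ v = 2 ∨ σ v = 3 ∨ σ v = 4 ∨ σ v = 5 := by
      simp only [Fin.ext_iff]
      omega
    have adjOf : ∀ (w : V) (c : Fin 6), σ w = c → σ v ≠ c → Mhp (σ v) c = Entry.one →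
        G.Adj v w := by
      intro w c hw hne hone
      by_contra hna
      have hvw : v ≠ w := fun e => hne (e ▸ hw)
      exact (hM v w hvw).2 hna (by rw [hw]; exact hone)
    have nadjOf : ∀ (w : V) (c : Fin 6), σ w = c → σ v ≠ c → Mhp (σ v) c = Entry.zero →
        ¬ G.Adj v w := by
      intro w c hw hne hzero
      intro ha
      have hvw : v ≠ w := fun e => hne (e ▸ hw)
      exact (hM v w hvw).1 ha (by rw [hw]; exact hzero)
    rcases hcases with h | h | h | h | h | h
    · have : v ∈ t.2.1 := h
      simp only [hpFwd, if_pos this, h]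
    · have h1 : v ∉ t.2.1 := by simp [ht, h]
      have h2 : v ∈ t.2.2 := h
      simp only [hpFwd, if_neg h1, if_pos h2, h]
    · have h1 : v ∉ t.2.1 := by simp [ht, h]
      have h2 : v ∉ t.2.2 := by simp [ht, h]
      have a1 : ∀ w ∈ t.2.1, G.Adj v w := fun w hw =>
        adjOf w 0 hw (by simp [h]) (by rw [h]; rfl)
      have a2 : ∀ w ∈ t.2.2, G.Adj v w := fun w hw =>
        adjOf w 1 hw (by simp [h]) (by rw [h]; rfl)
      simp only [hpFwd, if_neg h1, if_neg h2, if_pos a1, if_pos a2, h]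
    · have h1 : v ∉ t.2.1 := by simp [ht, h]
      have h2 : v ∉ t.2.2 := by simp [ht, h]
      have a1 : ¬ ∀ w ∈ t.2.1, G.Adj v w := by
        obtain ⟨w, hw⟩ := hn1
        intro hall
        exact nadjOf w 0 hw (by simp [h]) (by rw [h]; rfl) (hall w hw)
      have a2 : ∀ w ∈ t.2.2, G.Adj v w := fun w hw =>
        adjOf w 1 hw (by simp [h]) (by rw [h]; rfl)
      simp only [hpFwd, if_neg h1, if_neg h2, if_neg a1, if_pos a2, h]
    · have h1 : v ∉ t.2.1 := by simp [ht, h]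
      have h2 : v ∉ t.2.2 := by simp [ht, h]
      have a1 : ∀ w ∈ t.2.1, G.Adj v w := fun w hw =>
        adjOf w 0 hw (by simp [h]) (by rw [h]; rfl)
      have a2 : ¬ ∀ w ∈ t.2.2, G.Adj v w := by
        obtain ⟨w, hw⟩ := hn2
        intro hall
        exact nadjOf w 1 hw (by simp [h]) (by rw [h]; rfl) (hall w hw)
      simp only [hpFwd, if_neg h1, if_neg h2, if_pos a1, if_neg a2, h]
    · have h1 : v ∉ t.2.1 := by simp [ht, h]
      have h2 : v ∉ t.2.2 := by simp [ht, h]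
      have a1 : ¬ ∀ w ∈ t.2.1, G.Adj v w := by
        obtain ⟨w, hw⟩ := hn1
        intro hall
        exact nadjOf w 0 hw (by simp [h]) (by rw [h]; rfl) (hall w hw)
      have a2 : ¬ ∀ w ∈ t.2.2, G.Adj v w := by
        obtain ⟨w, hw⟩ := hn2
        intro hall
        exact nadjOf w 1 hw (by simp [h]) (by rw [h]; rfl) (hall w hw)
      simp only [hpFwd, if_neg h1, if_neg h2, if_neg a1, if_neg a2, h]
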